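/- arXiv:0910.3091 — 2 statements merged into one kernel-verified Lean document; each statement's English description precedes it below -/
import Mathlib

section
/- Every infinite 0-dimensional compact Hausdorff space K has a very nice bidiscrete system of cardinality d(K), the density of K. -/
open Cardinal

universe u

/-- The density of a topological space: the least cardinality of a dense subset. -/
noncomputable def density (X : Type u) [TopologicalSpace X] : Cardinal.{u} :=
  sInf {c : Cardinal.{u} | ∃ s : Set X, Dense s ∧ #s = c}

/-- A set of pairs of points of `K` is a *very nice bidiscrete system* in `K` if there are
clopen sets, one for each pair `p` in the system, containing the second coordinate of `p`
but not the first coordinate of `p`, and containing either both or neither of the two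
coordinates of every other pair of the system. -/
def IsVeryNiceBidiscrete {K : Type u} [TopologicalSpace K] (S : Set (K × K)) : Prop :=
  ∃ H : S → Set K, ∀ p : S,
    IsClopen (H p) ∧ (p : K × K).2 ∈ H p ∧ (p : K × K).1 ∉ H p ∧
    ∀ q : S, q ≠ p → ((q : K × K).1 ∈ H p ↔ (q : K × K).2 ∈ H p)

section Aux

variable {K : Type u} [TopologicalSpace K]

lemma density_le_of_dense {s : Set K} (hs : Dense s) : density K ≤ #s :=
  csInf_le (OrderBot.bddBelow _) ⟨s, hs, rfl⟩

lemma aleph0_le_density [T1Space K] [Infinite K] : ℵ₀ ≤ density K := by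
  have hne : ({c : Cardinal.{u} | ∃ s : Set K, Dense s ∧ #s = c}).Nonempty :=
    ⟨_, Set.univ, dense_univ, rfl⟩
  unfold density
  apply le_csInf hne
  rintro c ⟨s, hs, rfl⟩
  by_contra h
  have hfin : s.Finite := by rwa [not_le, Cardinal.lt_aleph0_iff_set_finite] at h
  have h1 : closure s = s := hfin.isClosed.closure_eq
  have h2 : (Set.univ : Set K) = s := by rw [← hs.closure_eq, h1]
  exact Set.infinite_univ (h2 ▸ hfin)

lemma vnb_subset {S T : Set (K × K)} (hTS : T ⊆ S) (h : IsVeryNiceBidiscrete S) :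
    IsVeryNiceBidiscrete T := by
  obtain ⟨H, hH⟩ := h
  refine ⟨fun p => H ⟨p.1, hTS p.2⟩, fun p => ?_⟩
  obtain ⟨h1, h2, h3, h4⟩ := hH ⟨p.1, hTS p.2⟩
  refine ⟨h1, h2, h3, fun q hq => h4 ⟨q.1, hTS q.2⟩ ?_⟩
  simpa [Subtype.ext_iff] using hq

lemma vnb_shrink {S : Set (K × K)} {c : Cardinal.{u}} (h : IsVeryNiceBidiscrete S)
    (hc : c ≤ #S) : ∃ T : Set (K × K), IsVeryNiceBidiscrete T ∧ #T = c := by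
  obtain ⟨p, hp⟩ := Cardinal.le_mk_iff_exists_set.mp hc
  refine ⟨Subtype.val '' p, vnb_subset ?_ h, ?_⟩
  · rintro z ⟨w, _, rfl⟩; exact w.2
  · rw [Cardinal.mk_image_eq Subtype.val_injective, hp]

lemma vnb_of_pieces {ι : Type u} (V H : ι → Set K) (x y : ι → K)
    (hdisj : ∀ i j, i ≠ j → Disjoint (V i) (V j))
    (hxV : ∀ i, x i ∈ V i) (hyV : ∀ i, y i ∈ V i)
    (hH : ∀ i, IsClopen (H i)) (hHV : ∀ i, H i ⊆ V i)
    (hyH : ∀ i, y i ∈ H i) (hxH : ∀ i, x i ∉ H i) :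
    ∃ S : Set (K × K), IsVeryNiceBidiscrete S ∧ #S = #ι := by
  have hxinj : Function.Injective x := by
    intro i j hij
    by_contra hne
    exact Set.disjoint_left.mp (hdisj i j hne) (hxV i) (hij ▸ hxV j)
  set f : ι → K × K := fun i => (x i, y i) with hf
  have hfinj : Function.Injective f := fun i j h => hxinj (congrArg Prod.fst h)
  refine ⟨Set.range f, ⟨fun p => H p.2.choose, fun p => ?_⟩, Cardinal.mk_range_eq f hfinj⟩
  obtain hspec := p.2.choose_spec
  set i := p.2.choose with hi
  have h1 : (p : K × K).1 = x i := by rw [← hspec]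
  have h2 : (p : K × K).2 = y i := by rw [← hspec]
  refine ⟨hH i, by rw [h2]; exact hyH i, by rw [h1]; exact hxH i, ?_⟩
  intro q hq
  obtain hqspec := q.2.choose_spec
  set j := q.2.choose with hj
  have hij : j ≠ i := by
    intro h
    apply hq
    apply Subtype.ext
    rw [← hqspec, ← hspec, h]
  have hd := hdisj i j (Ne.symm hij)
  have hq1 : (q : K × K).1 = x j := by rw [← hqspec]
  have hq2 : (q : K × K).2 = y j := by rw [← hqspec]
  constructor
  · intro hmem
    have hv : (q : K × K).1 ∈ V j := by rw [hq1]; exact hxV j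
    exact (Set.disjoint_left.mp hd (hHV i hmem) hv).elim
  · intro hmem
    have hv : (q : K × K).2 ∈ V j := by rw [hq2]; exact hyV j
    exact (Set.disjoint_left.mp hd (hHV i hmem) hv).elim

/-- If the points of a closed set `W` are separated by a family `G` of clopen sets, then `W`
has a dense (in `W`) subset of size at most `#(Finset (↥G × Bool))`. -/
lemma exists_small_dense [CompactSpace K] (W : Set K) (hWcl : IsClosed W) (G : Set (Set K))
    (hGcl : ∀ g ∈ G, IsClopen g)
    (hsep : ∀ x ∈ W, ∀ y ∈ W, x ≠ y → ∃ g ∈ G, ¬ (x ∈ g ↔ y ∈ g)) :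
    ∃ E ⊆ W, #E ≤ #(Finset (↥G × Bool)) ∧ W ⊆ closure E := by
  classical
  set side : ↥G × Bool → Set K := fun z => if z.2 then (z.1 : Set K) else (z.1 : Set K)ᶜ
    with hside
  set F : Finset (↥G × Bool) → Set K := fun s => W ∩ ⋂ z ∈ s, side z with hF
  set E : Set K := Set.range (fun ss : {s : Finset (↥G × Bool) // (F s).Nonempty} =>
    ss.2.some) with hE
  have hEW : E ⊆ W := by
    rintro k ⟨ss, rfl⟩
    exact (ss.2.some_mem).1
  refine ⟨E, hEW, ?_, ?_⟩
  · calc #E ≤ #{s : Finset (↥G × Bool) // (F s).Nonempty} := Cardinal.mk_range_le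
      _ ≤ #(Finset (↥G × Bool)) := Cardinal.mk_subtype_le _
  · intro x hx
    rw [mem_closure_iff]
    intro U hU hxU
    set C := W \ U with hC
    have hCc : IsCompact C := (hWcl.sdiff hU).isCompact
    have h1 : ∀ y : ↥C, ∃ g ∈ G, ¬ (x ∈ g ↔ (y : K) ∈ g) := by
      intro y
      have hyW : (y : K) ∈ W := y.2.1
      have hne : x ≠ (y : K) := fun he => y.2.2 (he ▸ hxU)
      exact hsep x hx y hyW hne
    choose g hgG hgne using h1
    set zfun : ↥C → ↥G × Bool := fun y => (⟨g y, hgG y⟩, decide (x ∈ g y)) with hzfun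
    set T : ↥C → Set K := fun y => side (zfun y) with hT
    have hTy : ∀ y : ↥C, (x ∈ g y → T y = g y) ∧ (x ∉ g y → T y = (g y)ᶜ) := by
      intro y
      constructor <;> intro hd <;>
        simp only [hT, hzfun, hside, decide_eq_true_eq] <;>
        [rw [if_pos hd]; rw [if_neg hd]]
    have hxT : ∀ y, x ∈ T y := by
      intro y
      by_cases hd : x ∈ g y
      · rw [(hTy y).1 hd]; exact hd
      · rw [(hTy y).2 hd]; exact hd
    have hyT : ∀ y, (y : K) ∉ T y := by
      intro y
      by_cases hd : x ∈ g y
      · rw [(hTy y).1 hd]; intro hyg; exact hgne y (iff_of_true hd hyg)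
      · rw [(hTy y).2 hd]; intro hyc; exact hgne y (iff_of_false hd hyc)
    have hTclopen : ∀ y, IsClopen (T y) := by
      intro y
      by_cases hd : x ∈ g y
      · rw [(hTy y).1 hd]; exact hGcl _ (hgG y)
      · rw [(hTy y).2 hd]; exact (hGcl _ (hgG y)).compl
    have hcover : C ⊆ ⋃ y : ↥C, (T y)ᶜ := by
      intro z hz
      exact Set.mem_iUnion.mpr ⟨⟨z, hz⟩, hyT ⟨z, hz⟩⟩
    obtain ⟨t, ht⟩ := hCc.elim_finite_subcover (fun y : ↥C => (T y)ᶜ)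
      (fun y => (hTclopen y).compl.isOpen) hcover
    set s : Finset (↥G × Bool) := t.image zfun with hs
    have hxF : x ∈ F s := by
      refine ⟨hx, ?_⟩
      simp only [Set.mem_iInter]
      intro z hzs
      rw [hs, Finset.mem_image] at hzs
      obtain ⟨y, _, rfl⟩ := hzs
      exact hxT y
    have hneF : (F s).Nonempty := ⟨x, hxF⟩
    refine ⟨hneF.some, ?_, ⟨⟨s, hneF⟩, rfl⟩⟩
    by_contra hptU
    have hptC : hneF.some ∈ C := ⟨hneF.some_mem.1, hptU⟩
    obtain ⟨y, hyt, hy⟩ := Set.mem_iUnion₂.mp (ht hptC)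
    have hmem : hneF.some ∈ T y := by
      have hzs : zfun y ∈ s := by
        rw [hs, Finset.mem_image]
        exact ⟨y, hyt, rfl⟩
      have h2 := hneF.some_mem.2
      simp only [Set.mem_iInter] at h2
      exact h2 _ hzs
    exact hy hmem

/-- A "good system": a set of (pair, clopen set) entries witnessing a very nice bidiscrete
system, with pairwise distinct first coordinates of the pairs. -/
def GoodSys (T : Set ((K × K) × Set K)) : Prop :=
  (∀ e ∈ T, IsClopen e.2 ∧ e.1.2 ∈ e.2 ∧ e.1.1 ∉ e.2 ∧
    ∀ e' ∈ T, e'.1 ≠ e.1 → (e'.1.1 ∈ e.2 ↔ e'.1.2 ∈ e.2)) ∧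
  ∀ e ∈ T, ∀ e' ∈ T, e ≠ e' → e.1.1 ≠ e'.1.1

lemma vnb_of_good {T : Set ((K × K) × Set K)} (hT : GoodSys T) :
    ∃ S : Set (K × K), IsVeryNiceBidiscrete S ∧ #S = #T := by
  classical
  have hinj : Set.InjOn Prod.fst T := by
    intro e he e' he' h
    by_contra hne
    exact hT.2 e he e' he' hne (congrArg Prod.fst h)
  refine ⟨Prod.fst '' T, ?_, Cardinal.mk_image_eq_of_injOn _ _ hinj⟩
  have hmem : ∀ p : ↥(Prod.fst '' T), ∃ e, e ∈ T ∧ Prod.fst e = (p : K × K) := fun p => p.2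
  refine ⟨fun p => (hmem p).choose.2, fun p => ?_⟩
  obtain ⟨heT, hep⟩ := (hmem p).choose_spec
  obtain ⟨hcl, h2, h1, hsp⟩ := hT.1 _ heT
  rw [hep] at h2 h1
  refine ⟨hcl, h2, h1, ?_⟩
  intro q hq
  obtain ⟨heT', hep'⟩ := (hmem q).choose_spec
  have hne : (hmem q).choose.1 ≠ (hmem p).choose.1 := by
    rw [hep, hep']
    exact fun h => hq (Subtype.ext h)
  have hres := hsp _ heT' hne
  rwa [hep'] at hres

end Aux

/-- Every infinite 0-dimensional compact Hausdorff space `K` (i.e. one whose clopen sets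
form a base for the topology) has a very nice bidiscrete system of cardinality `d(K)`,
the density of `K`. -/
theorem every_infinite_zero_dim_compactum_has_very_nice_bidiscrete_system_of_density_size
    (K : Type u) [TopologicalSpace K] [CompactSpace K] [T2Space K] [Infinite K]
    (hbase : TopologicalSpace.IsTopologicalBasis {s : Set K | IsClopen s}) :
    ∃ S : Set (K × K), IsVeryNiceBidiscrete S ∧ #S = density K := by
  classical
  have hκinf : ℵ₀ ≤ density K := aleph0_le_density
  set κ := density K with hκdef
  suffices h : ∃ S : Set (K × K), IsVeryNiceBidiscrete S ∧ κ ≤ #S by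
    obtain ⟨S, hS, hle⟩ := h
    exact vnb_shrink hS hle
  set Iso : Set K := {z : K | IsOpen ({z} : Set K)} with hIsoDef
  by_cases h1 : κ ≤ #Iso
  · -- Case 1: many isolated points
    obtain ⟨p, hp⟩ := Cardinal.le_mk_iff_exists_set.mp h1
    set ι := ↥p with hι
    have hcard : #(ι × Bool) = #ι := by
      have e1 : #(ι × Bool) = #(Bool × ι) := Cardinal.mk_congr (Equiv.prodComm _ _)
      have e2 : #(Bool × ι) = #(ι ⊕ ι) := Cardinal.mk_congr (Equiv.boolProdEquivSum ι)
      rw [e1, e2, Cardinal.mk_sum, Cardinal.lift_id, hp, Cardinal.add_eq_self hκinf]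
    obtain ⟨u⟩ := Cardinal.eq.mp hcard.symm
    set f : ι × Bool → K := fun z => (((u.symm z : ι) : ↥Iso) : K) with hfdef
    have hfinj : Function.Injective f := by
      intro a b hab
      exact u.symm.injective (Subtype.ext (Subtype.ext hab))
    have hfIso : ∀ z, f z ∈ Iso := fun z => ((u.symm z : ι) : ↥Iso).2
    obtain ⟨S, hS, hScard⟩ := vnb_of_pieces
      (fun i : ι => {f (i, false), f (i, true)}) (fun i => {f (i, true)})
      (fun i => f (i, false)) (fun i => f (i, true))
      (by
        intro i j hij
        rw [Set.disjoint_left]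
        rintro a (rfl | rfl) (h | h) <;>
          exact hij (congrArg Prod.fst (hfinj h)))
      (fun i => Set.mem_insert _ _)
      (fun i => Set.mem_insert_of_mem _ rfl)
      (fun i => ⟨isClosed_singleton, hfIso (i, true)⟩)
      (fun i => Set.singleton_subset_iff.mpr (Set.mem_insert_of_mem _ rfl))
      (fun i => rfl)
      (fun i h => by
        have := hfinj (Set.mem_singleton_iff.mp h)
        simp at this)
    refine ⟨S, hS, ?_⟩
    rw [hScard, hι, hp]
  by_cases h2 : ∃ 𝒱 : Set (Set K), (∀ V ∈ 𝒱, IsClopen V ∧ ∃ a ∈ V, ∃ b ∈ V, a ≠ b) ∧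
      𝒱.Pairwise Disjoint ∧ κ ≤ #𝒱
  · -- Case 2: a large disjoint family of fat clopen sets
    obtain ⟨𝒱, h𝒱, hdisj, hcard⟩ := h2
    have hdata : ∀ V : ↥𝒱, ∃ a ∈ (V : Set K), ∃ b ∈ (V : Set K), ∃ Hv : Set K,
        IsClopen Hv ∧ b ∈ Hv ∧ Hv ⊆ (V : Set K) ∧ a ∉ Hv := by
      intro V
      obtain ⟨hVcl, a, ha, b, hb, hab⟩ := h𝒱 V V.2
      have hopen : IsOpen ((V : Set K) \ {a}) := hVcl.isOpen.sdiff isClosed_singleton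
      have hbmem : b ∈ (V : Set K) \ {a} := ⟨hb, fun h => hab (Set.mem_singleton_iff.mp h).symm⟩
      obtain ⟨Hv, hHvcl, hbHv, hHvsub⟩ := hbase.exists_subset_of_mem_open hbmem hopen
      exact ⟨a, ha, b, hb, Hv, hHvcl, hbHv, fun w hw => (hHvsub hw).1,
        fun h => (hHvsub h).2 rfl⟩
    choose a ha b hb Hv hHvcl hbHv hHvsub haHv using hdata
    obtain ⟨S, hS, hScard⟩ := vnb_of_pieces (fun V : ↥𝒱 => (V : Set K)) Hv a b
      (fun i j hij => hdisj i.2 j.2 (fun h => hij (Subtype.ext h)))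
      ha hb hHvcl hHvsub hbHv haHv
    refine ⟨S, hS, ?_⟩
    rw [hScard]
    exact hcard
  · -- Case 3: Zorn's lemma on good systems
    have hIsolt : #Iso < κ := not_le.mp h1
    have hchain : ∀ c ⊆ {T : Set ((K × K) × Set K) | GoodSys T}, IsChain (· ⊆ ·) c →
        ∃ ub ∈ {T : Set ((K × K) × Set K) | GoodSys T}, ∀ s ∈ c, s ⊆ ub := by
      intro c hc hch
      refine ⟨⋃₀ c, ⟨?_, ?_⟩, fun s hs => Set.subset_sUnion_of_mem hs⟩
      · rintro e ⟨T1, hT1, heT1⟩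
        obtain ⟨hcl, hc2, hc1, h4⟩ := (hc hT1).1 e heT1
        refine ⟨hcl, hc2, hc1, ?_⟩
        rintro e' ⟨T2, hT2, heT2⟩ hne
        rcases hch.total hT1 hT2 with hss | hss
        · exact ((hc hT2).1 e (hss heT1)).2.2.2 e' heT2 hne
        · exact h4 e' (hss heT2) hne
      · rintro e ⟨T1, hT1, heT1⟩ e' ⟨T2, hT2, heT2⟩ hne
        rcases hch.total hT1 hT2 with hss | hss
        · exact (hc hT2).2 e (hss heT1) e' heT2 hne
        · exact (hc hT1).2 e heT1 e' (hss heT2) hne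
    obtain ⟨M, hM⟩ := zorn_subset {T : Set ((K × K) × Set K) | GoodSys T} hchain
    have hMgood : GoodSys M := hM.prop
    have hMbig : κ ≤ #M := by
      by_contra hMlt'
      have hMlt : #M < κ := not_le.mp hMlt'
      set D : Set K := Iso ∪ (fun e : (K × K) × Set K => e.1.1) '' M ∪
        (fun e : (K × K) × Set K => e.1.2) '' M with hDdef
      have hDlt : #D < κ := by
        have s1 : #D ≤ #(Iso ∪ (fun e : (K × K) × Set K => e.1.1) '' M : Set K) +
            #((fun e : (K × K) × Set K => e.1.2) '' M) := Cardinal.mk_union_le _ _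
        have s2 : #(Iso ∪ (fun e : (K × K) × Set K => e.1.1) '' M : Set K) ≤
            Cardinal.mk Iso + #((fun e : (K × K) × Set K => e.1.1) '' M) := Cardinal.mk_union_le _ _
        have i1 : #((fun e : (K × K) × Set K => e.1.1) '' M) < κ :=
          lt_of_le_of_lt Cardinal.mk_image_le hMlt
        have i2 : #((fun e : (K × K) × Set K => e.1.2) '' M) < κ :=
          lt_of_le_of_lt Cardinal.mk_image_le hMlt
        exact lt_of_le_of_lt (le_trans s1 (add_le_add s2 le_rfl))
          (Cardinal.add_lt_of_lt hκinf (Cardinal.add_lt_of_lt hκinf hIsolt i1) i2)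
      set O : Set K := (closure D)ᶜ with hOdef
      have hOopen : IsOpen O := isClosed_closure.isOpen_compl
      have hcoordD : ∀ e ∈ M, e.1.1 ∈ D ∧ e.1.2 ∈ D := fun e he =>
        ⟨Or.inl (Or.inr ⟨e, he, rfl⟩), Or.inr ⟨e, he, rfl⟩⟩
      by_cases hpos : ∃ x ∈ O, ∃ y ∈ O, x ≠ y ∧ ∀ e ∈ M, (x ∈ e.2 ↔ y ∈ e.2)
      · -- extend the maximal system: contradiction
        obtain ⟨x, hx, y, hy, hxy, huns⟩ := hpos
        have hymem : y ∈ O \ {x} := ⟨hy, fun h => hxy (Set.mem_singleton_iff.mp h).symm⟩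
        have hopen : IsOpen (O \ {x}) := hOopen.sdiff isClosed_singleton
        obtain ⟨V, hVcl, hyV, hVsub⟩ := hbase.exists_subset_of_mem_open hymem hopen
        have hVO : ∀ w ∈ V, w ∉ closure D := fun w hw => (hVsub hw).1
        set e0 : (K × K) × Set K := ((x, y), V) with he0
        have hxO : x ∉ closure D := hx
        have hgood' : GoodSys (insert e0 M) := by
          constructor
          · rintro e (rfl | heM)
            · refine ⟨hVcl, hyV, fun h => (hVsub h).2 rfl, ?_⟩
              rintro e' (rfl | he'M) hne
              · exact absurd rfl hne
              · have hc1 : e'.1.1 ∉ V :=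
                  fun h => hVO _ h (subset_closure (hcoordD e' he'M).1)
                have hc2 : e'.1.2 ∉ V :=
                  fun h => hVO _ h (subset_closure (hcoordD e' he'M).2)
                exact iff_of_false hc1 hc2
            · obtain ⟨hcl, hc2, hc1, h4⟩ := hMgood.1 e heM
              refine ⟨hcl, hc2, hc1, ?_⟩
              rintro e' (rfl | he'M) hne
              · exact huns e heM
              · exact h4 e' he'M hne
          · rintro e (rfl | heM) e' (rfl | he'M) hne
            · exact absurd rfl hne
            · intro h
              have h' : x = e'.1.1 := h
              have hxD : x ∈ D := by rw [h']; exact (hcoordD e' he'M).1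
              exact hxO (subset_closure hxD)
            · intro h
              have h' : e.1.1 = x := h
              have hxD : x ∈ D := by rw [← h']; exact (hcoordD e heM).1
              exact hxO (subset_closure hxD)
            · exact hMgood.2 e heM e' he'M hne
        have hsub : insert e0 M ⊆ M := hM.2 hgood' (Set.subset_insert e0 M)
        have he0M : e0 ∈ M := hsub (Set.mem_insert e0 M)
        exact hxO (subset_closure (hcoordD e0 he0M).1)
      · -- no extension possible: build a small dense set, contradiction
        push_neg at hpos
        -- maximal disjoint family of clopen subsets of O
        set 𝒜 : Set (Set (Set K)) := {𝒲 : Set (Set K) |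
          (∀ W ∈ 𝒲, IsClopen W ∧ W ⊆ O ∧ W.Nonempty) ∧ 𝒲.Pairwise Disjoint} with h𝒜def
        have hchain2 : ∀ c ⊆ 𝒜, IsChain (· ⊆ ·) c → ∃ ub ∈ 𝒜, ∀ s ∈ c, s ⊆ ub := by
          intro c hc hch
          refine ⟨⋃₀ c, ⟨?_, ?_⟩, fun s hs => Set.subset_sUnion_of_mem hs⟩
          · rintro W ⟨𝒲1, h𝒲1, hW1⟩
            exact (hc h𝒲1).1 W hW1
          · rintro W ⟨𝒲1, h𝒲1, hW1⟩ W' ⟨𝒲2, h𝒲2, hW2⟩ hne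
            rcases hch.total h𝒲1 h𝒲2 with hss | hss
            · exact (hc h𝒲2).2 (hss hW1) hW2 hne
            · exact (hc h𝒲1).2 hW1 (hss hW2) hne
        obtain ⟨𝒲, h𝒲max⟩ := zorn_subset 𝒜 hchain2
        have h𝒲 := h𝒲max.prop
        have htwo : ∀ W ∈ 𝒲, ∃ a ∈ W, ∃ b ∈ W, a ≠ b := by
          intro W hW
          obtain ⟨hWcl, hWO, w, hw⟩ := h𝒲.1 W hW
          by_contra hno
          push_neg at hno
          have hWsing : W = {w} := by
            apply subset_antisymm
            · intro a ha; exact hno a ha w hw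
            · rintro _ rfl; exact hw
          have hwIso : w ∈ Iso := by
            rw [hIsoDef]
            exact (hWsing ▸ hWcl).isOpen
          exact hWO hw (subset_closure (Or.inl (Or.inl hwIso)))
        have h𝒲lt : #𝒲 < κ := by
          rw [← not_le]
          intro hge
          exact h2 ⟨𝒲, fun W hW => ⟨(h𝒲.1 W hW).1, htwo W hW⟩, h𝒲.2, hge⟩
        have hOcl : O ⊆ closure (⋃₀ 𝒲) := by
          intro z hz
          rw [mem_closure_iff]
          intro Uo hUo hzU
          have hzmem : z ∈ Uo ∩ O := ⟨hzU, hz⟩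
          obtain ⟨V, hVcl, hzV, hVsub⟩ :=
            hbase.exists_subset_of_mem_open hzmem (hUo.inter hOopen)
          rcases Set.eq_empty_or_nonempty (V ∩ ⋃₀ 𝒲) with hem | hne
          · have hVW : ∀ W ∈ 𝒲, Disjoint V W := by
              intro W hW
              rw [Set.disjoint_left]
              intro w hwV hwW
              exact Set.eq_empty_iff_forall_notMem.mp hem w ⟨hwV, ⟨W, hW, hwW⟩⟩
            have hmem𝒜 : insert V 𝒲 ∈ 𝒜 := by
              constructor
              · rintro W (rfl | hW)
                · exact ⟨hVcl, fun w hw => (hVsub hw).2, ⟨z, hzV⟩⟩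
                · exact h𝒲.1 W hW
              · rintro W (rfl | hW) W' (rfl | hW') hne
                · exact absurd rfl hne
                · exact hVW W' hW'
                · exact (hVW W hW).symm
                · exact h𝒲.2 hW hW' hne
            have hVin : V ∈ 𝒲 := h𝒲max.2 hmem𝒜 (Set.subset_insert V 𝒲)
              (Set.mem_insert V 𝒲)
            exact absurd hem (Set.nonempty_iff_ne_empty.mp ⟨z, hzV, V, hVin, hzV⟩)
          · obtain ⟨w, hwV, hwU⟩ := hne
            exact ⟨w, (hVsub hwV).1, hwU⟩
        set G : Set (Set K) := (fun e : (K × K) × Set K => e.2) '' M with hGdef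
        have hGcl : ∀ g ∈ G, IsClopen g := by
          rintro g ⟨e, he, rfl⟩
          exact (hMgood.1 e he).1
        have hGlt : #G < κ := lt_of_le_of_lt Cardinal.mk_image_le hMlt
        have hsmall : ∀ W : ↥𝒲, ∃ E ⊆ (W : Set K), #E ≤ #(Finset (↥G × Bool)) ∧
            (W : Set K) ⊆ closure E := by
          intro W
          apply exists_small_dense _ ((h𝒲.1 W W.2).1.isClosed) G hGcl
          intro x hxW y hyW hxy
          obtain ⟨e, heM, hne⟩ :=
            hpos x ((h𝒲.1 W W.2).2.1 hxW) y ((h𝒲.1 W W.2).2.1 hyW) hxy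
          refine ⟨e.2, ⟨e, heM, rfl⟩, ?_⟩
          tauto
        choose ℰ hℰsub hℰcard hℰcl using hsmall
        have hFinlt : #(Finset (↥G × Bool)) < κ := by
          by_cases hGfin : #G < ℵ₀
          · have : G.Finite := Cardinal.lt_aleph0_iff_set_finite.mp hGfin
            have : Finite ↥G := this.to_subtype
            have : Fintype (↥G × Bool) := Fintype.ofFinite _
            exact lt_of_lt_of_le (Cardinal.lt_aleph0_of_finite _) hκinf
          · have hGinf : ℵ₀ ≤ #G := not_lt.mp hGfin
            have : Infinite ↥G := Cardinal.infinite_iff.mpr hGinf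
            have : Infinite (↥G × Bool) := inferInstance
            rw [Cardinal.mk_finset_of_infinite]
            have e1 : #(↥G × Bool) = #G * 2 := by
              rw [Cardinal.mk_prod, Cardinal.mk_bool, Cardinal.lift_id', Cardinal.lift_two]
            rw [e1]
            calc #G * 2 ≤ #G * #G :=
                mul_le_mul' le_rfl (le_trans (by exact_mod_cast (Cardinal.nat_lt_aleph0 2).le) hGinf)
              _ = #G := Cardinal.mul_eq_self hGinf
              _ < κ := hGlt
        set E : Set K := ⋃ W : ↥𝒲, ℰ W with hEdef
        have hEcard : #E < κ := by
          have s1 : #E ≤ #↥𝒲 * ⨆ W : ↥𝒲, #(ℰ W) := Cardinal.mk_iUnion_le _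
          have s2 : (⨆ W : ↥𝒲, #(ℰ W)) ≤ #(Finset (↥G × Bool)) := ciSup_le' hℰcard
          exact lt_of_le_of_lt (le_trans s1 (mul_le_mul' le_rfl s2))
            (Cardinal.mul_lt_of_lt hκinf h𝒲lt hFinlt)
        have hdense : Dense (D ∪ E) := by
          intro z
          rcases Classical.em (z ∈ closure D) with hc | hc
          · exact closure_mono Set.subset_union_left hc
          · have hzO : z ∈ O := hc
            have hsub1 : ⋃₀ 𝒲 ⊆ closure E := by
              rintro w ⟨W, hW, hwW⟩
              have := hℰcl ⟨W, hW⟩ hwW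
              exact closure_mono (Set.subset_iUnion (fun W : ↥𝒲 => ℰ W) ⟨W, hW⟩) this
            have : z ∈ closure (closure E) := closure_mono hsub1 (hOcl hzO)
            rw [closure_closure] at this
            exact closure_mono Set.subset_union_right this
        have hfinal : κ ≤ #(D ∪ E : Set K) := density_le_of_dense hdense
        have : #(D ∪ E : Set K) < κ := lt_of_le_of_lt (Cardinal.mk_union_le _ _)
          (Cardinal.add_lt_of_lt hκinf hDlt hEcard)
        exact absurd hfinal (not_le.mpr this)
    obtain ⟨S, hS, hScard⟩ := vnb_of_good hMgood
    exact ⟨S, hS, hScard ▸ hMbig⟩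
end

section
/- Let K be a non-empty closed subset of 2^{ω₁} satisfying conditions (R4) and (R8). Then the map φ : K → 2^ω defined by φ(x) = x↾ω is (at most) 2-to-1, i.e., for every t ∈ 2^ω the fiber {x ∈ K : x↾ω = t} has at most two elements. -/
noncomputable section

open Cardinal Set

/-- The first uncountable ordinal `ω₁`. -/
def ω1 : Ordinal.{0} := (Cardinal.aleph 1).ord

/-- We represent an element of the Cantor cube `2^α` (for an ordinal `α`) as a function
`Ordinal → Bool` vanishing on coordinates `≥ α`. `truncate α x` is the restriction
`x↾α` of `x` to `α` in this representation. -/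
def truncate (α : Ordinal.{0}) (x : Ordinal.{0} → Bool) : Ordinal.{0} → Bool :=
  fun β => if β < α then x β else false

/-- Condition (R4) for `K ⊆ 2^{ω₁}` with split points `s_α ∈ 2^α` (for `ω ≤ α < ω₁`):
(i) both extensions of `s_α` by `0` and by `1` at coordinate `α` belong to
`K_{α+1} = {x↾(α+1) : x ∈ K}`, and (ii) whenever `u, v ∈ K_{α+1}` satisfy `u↾α = v↾α`
and `u(α) ≠ v(α)`, then `u↾α = s_α`. -/
def CondR4 (K : Set (Ordinal.{0} → Bool)) (s : Ordinal.{0} → Ordinal.{0} → Bool) : Prop :=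
  ∀ α : Ordinal.{0}, Ordinal.omega0 ≤ α → α < ω1 →
    truncate α (s α) = s α ∧
    (∀ b : Bool, Function.update (s α) α b ∈ truncate (α + 1) '' K) ∧
    (∀ u ∈ truncate (α + 1) '' K, ∀ v ∈ truncate (α + 1) '' K,
      truncate α u = truncate α v → u α ≠ v α → truncate α u = s α)

/-- Condition (R8): whenever `ω ≤ α < β < ω₁`, `s_β↾α ≠ s_α`. -/
def CondR8 (s : Ordinal.{0} → Ordinal.{0} → Bool) : Prop :=
  ∀ α β : Ordinal.{0}, Ordinal.omega0 ≤ α → α < β → β < ω1 →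
    truncate α (s β) ≠ s α

lemma truncate_truncate {α β : Ordinal.{0}} (h : α ≤ β) (x : Ordinal.{0} → Bool) :
    truncate α (truncate β x) = truncate α x := by
  funext γ
  simp only [truncate]
  by_cases h1 : γ < α
  · rw [if_pos h1, if_pos h1, if_pos (lt_of_lt_of_le h1 h)]
  · rw [if_neg h1, if_neg h1]

lemma split_lemma (K : Set (Ordinal.{0} → Bool))
    (hKsub : ∀ x ∈ K, truncate ω1 x = x)
    (s : Ordinal.{0} → Ordinal.{0} → Bool) (hR4 : CondR4 K s)
    (t : Ordinal.{0} → Bool)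
    {x y : Ordinal.{0} → Bool} (hx : x ∈ K) (hy : y ∈ K)
    (htx : truncate Ordinal.omega0 x = t) (hty : truncate Ordinal.omega0 y = t)
    (hne : x ≠ y) :
    ∃ α, Ordinal.omega0 ≤ α ∧ α < ω1 ∧ x α ≠ y α ∧
      truncate α x = s α ∧ truncate α y = s α := by
  have hA : {β : Ordinal.{0} | x β ≠ y β}.Nonempty := by
    rw [Set.nonempty_iff_ne_empty]
    intro h
    apply hne
    funext β
    by_contra hb
    have hmem : β ∈ {β : Ordinal.{0} | x β ≠ y β} := hb
    rw [h] at hmem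
    exact hmem
  set α := Ordinal.lt_wf.min _ hA with hαdef
  have hmem : x α ≠ y α := Ordinal.lt_wf.min_mem _ hA
  have hbelow : ∀ β < α, x β = y β := fun β hβ => by
    by_contra hb
    exact Ordinal.lt_wf.not_lt_min _ hb hβ
  have hω : Ordinal.omega0 ≤ α := by
    by_contra h
    push_neg at h
    have h1 : x α = t α := by
      have := congrFun htx α
      simpa [truncate, h] using this
    have h2 : y α = t α := by
      have := congrFun hty α
      simpa [truncate, h] using this
    exact hmem (h1.trans h2.symm)
  have hlt : α < ω1 := by
    by_contra h
    push_neg at h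
    have h1 : x α = false := by
      have := congrFun (hKsub x hx) α
      simpa [truncate, not_lt.mpr h] using this.symm
    have h2 : y α = false := by
      have := congrFun (hKsub y hy) α
      simpa [truncate, not_lt.mpr h] using this.symm
    exact hmem (h1.trans h2.symm)
  have hxy : truncate α x = truncate α y := by
    funext β
    simp only [truncate]
    split_ifs with h1
    · exact hbelow β h1
    · rfl
  have hsucc : α < α + 1 := by
    rw [Ordinal.add_one_eq_succ]; exact Order.lt_succ α
  have hle : α ≤ α + 1 := hsucc.le
  obtain ⟨-, -, h3⟩ := hR4 α hω hlt
  have hres := h3 (truncate (α + 1) x) ⟨x, hx, rfl⟩ (truncate (α + 1) y) ⟨y, hy, rfl⟩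
    (by rw [truncate_truncate hle, truncate_truncate hle, hxy])
    (by simpa [truncate, hsucc] using hmem)
  rw [truncate_truncate hle] at hres
  exact ⟨α, hω, hlt, hmem, hres, hxy ▸ hres⟩

lemma two_splits (s : Ordinal.{0} → Ordinal.{0} → Bool) (hR8 : CondR8 s)
    {a : Ordinal.{0} → Bool} {α γ : Ordinal.{0}}
    (hαω : Ordinal.omega0 ≤ α) (hγω : Ordinal.omega0 ≤ γ)
    (hαlt : α < ω1) (hγlt : γ < ω1) (hne : α ≠ γ)
    (h1 : truncate α a = s α) (h2 : truncate γ a = s γ) : False := by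
  rcases hne.lt_or_gt with h | h
  · exact hR8 α γ hαω h hγlt (by rw [← h2, truncate_truncate h.le, h1])
  · exact hR8 γ α hγω h hαlt (by rw [← h1, truncate_truncate h.le, h2])

/-- Let `K` be a non-empty closed subset of `2^{ω₁}` satisfying conditions (R4) and (R8)
with split points `s_α`. Then the map `φ : K → 2^ω`, `φ(x) = x↾ω`, is (at most) 2-to-1:
for every `t ∈ 2^ω` the fiber `{x ∈ K : x↾ω = t}` has at most two elements. -/
theorem restriction_to_omega_two_to_one
    (K : Set (Ordinal.{0} → Bool)) (hKne : K.Nonempty) (hKcl : IsClosed K)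
    (hKsub : ∀ x ∈ K, truncate ω1 x = x)
    (s : Ordinal.{0} → Ordinal.{0} → Bool) (hR4 : CondR4 K s) (hR8 : CondR8 s)
    (t : Ordinal.{0} → Bool) (ht : truncate Ordinal.omega0 t = t) :
    {x ∈ K | truncate Ordinal.omega0 x = t}.encard ≤ 2 := by
  set S := {x ∈ K | truncate Ordinal.omega0 x = t} with hS
  rcases Set.eq_empty_or_nonempty S with h | ⟨x, hx⟩
  · simp [h]
  by_cases hone : ∀ y ∈ S, y = x
  · have : S ⊆ {x} := fun y hy => hone y hy
    exact le_trans (Set.encard_le_encard this) (by simp)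
  push_neg at hone
  obtain ⟨y, hy, hyx⟩ := hone
  have hsub : S ⊆ {x, y} := by
    intro z hz
    by_contra hzmem
    simp only [Set.mem_insert_iff, Set.mem_singleton_iff, not_or] at hzmem
    obtain ⟨hzx, hzy⟩ := hzmem
    obtain ⟨hxK, hxt⟩ := hx
    obtain ⟨hyK, hyt⟩ := hy
    obtain ⟨hzK, hzt⟩ := hz
    obtain ⟨α, hαω, hαlt, hxyα, hxα, hyα⟩ :=
      split_lemma K hKsub s hR4 t hxK hyK hxt hyt (Ne.symm hyx)
    obtain ⟨β, hβω, hβlt, hxzβ, hxβ, hzβ⟩ :=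
      split_lemma K hKsub s hR4 t hxK hzK hxt hzt (Ne.symm hzx)
    by_cases hαβ : α = β
    · subst hαβ
      have hyz : y α = z α := by
        have : ∀ a b c : Bool, a ≠ b → a ≠ c → b = c := by decide
        exact this _ _ _ hxyα hxzβ
      obtain ⟨γ, hγω, hγlt, hyzγ, hyγ, hzγ⟩ :=
        split_lemma K hKsub s hR4 t hyK hzK hyt hzt
          (fun hh => hzy (hh ▸ rfl))
      have hγα : α ≠ γ := fun hh => hyzγ (hh ▸ hyz)
      exact two_splits s hR8 hαω hγω hαlt hγlt hγα hyα hyγ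
    · exact two_splits s hR8 hαω hβω hαlt hβlt hαβ hxα hxβ
  calc S.encard ≤ ({x, y} : Set _).encard := Set.encard_le_encard hsub
    _ = 2 := Set.encard_pair (Ne.symm hyx)

end
end
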